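/- Let Γ be a connected δ-regular graph with diameter D equal to d (where d+1 is the number of distinct eigenvalues). If Γ is (D-1)-partially distance-regular (i.e., A_h = p_h(A) for all h ≤ D-1, where p_h are the predistance polynomials), then Γ is distance-regular, i.e., A_h = p_h(A) for all h ≤ D. -/

import Mathlib

open Matrix Polynomial



lemma my_charpoly_conj {V : Type*} [Fintype V] [DecidableEq V]
    (U B : Matrix V V ℝ) (h2 : U * star U = 1) :
    (U * B * star U).charpoly = B.charpoly := by
  have key : charmatrix (U * B * star U) =
      (C : ℝ →+* ℝ[X]).mapMatrix U * charmatrix B * (C : ℝ →+* ℝ[X]).mapMatrix (star U) := by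
    unfold charmatrix
    rw [Matrix.mul_sub, Matrix.sub_mul, ← _root_.map_mul, ← _root_.map_mul]
    congr 1
    rw [mul_assoc, (scalar_commute (n := V) (X : ℝ[X]) (fun r' => Commute.all _ _) _).eq,
      ← mul_assoc, ← _root_.map_mul, h2, _root_.map_one, one_mul]
  have hdet1 : ((C : ℝ →+* ℝ[X]).mapMatrix U) * ((C : ℝ →+* ℝ[X]).mapMatrix (star U)) = 1 := by
    rw [← _root_.map_mul, h2, _root_.map_one]
  unfold Matrix.charpoly
  rw [key, det_mul, det_mul, mul_right_comm, ← det_mul, hdet1, det_one, one_mul]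

lemma my_charpoly_diagonal {V : Type*} [Fintype V] [DecidableEq V] (μ : V → ℝ) :
    (diagonal μ).charpoly = ∏ i, (X - C (μ i)) := by
  have key : charmatrix (diagonal μ) = diagonal (fun i => X - C (μ i)) := by
    ext i j
    by_cases h : i = j
    · subst h; simp
    · simp [charmatrix_apply_ne _ _ _ h, diagonal_apply_ne _ h, diagonal_apply_ne μ h]
  unfold Matrix.charpoly
  rw [key, det_diagonal]

lemma my_aeval_diagonal {V : Type*} [Fintype V] [DecidableEq V] (μ : V → ℝ) (q : ℝ[X]) :
    aeval (diagonal μ) q = diagonal (fun i => q.eval (μ i)) := by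
  induction q using Polynomial.induction_on' with
  | add f g hf hg =>
    rw [map_add, hf, hg, diagonal_add]
    congr 1; funext i; simp
  | monomial n a =>
    rw [aeval_monomial, diagonal_pow, algebraMap_eq_diagonal, diagonal_mul_diagonal]
    congr 1; funext i
    simp [eval_monomial]

lemma my_eigen_const {V : Type*} [Fintype V] [DecidableEq V]
    (G : SimpleGraph V) [DecidableRel G.Adj] (δ : ℕ) (hreg : G.IsRegularOfDegree δ)
    (hconn : G.Connected) (x : V → ℝ) (hx : G.adjMatrix ℝ *ᵥ x = (δ : ℝ) • x) :
    ∀ u v : V, x u = x v := by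
  rcases isEmpty_or_nonempty V with hV | hV
  · intro u; exact (hV.false u).elim
  obtain ⟨u0, -, hmax⟩ := Finset.exists_max_image Finset.univ x ⟨Classical.arbitrary V, Finset.mem_univ _⟩
  have hmax' : ∀ w, x w ≤ x u0 := fun w => hmax w (Finset.mem_univ w)
  have step : ∀ a b : V, G.Adj a b → x a = x u0 → x b = x u0 := by
    intro a b hab ha
    by_contra hb
    have hblt : x b < x u0 := lt_of_le_of_ne (hmax' b) hb
    have h1 : (G.adjMatrix ℝ *ᵥ x) a = ∑ w ∈ G.neighborFinset a, x w :=
      G.adjMatrix_mulVec_apply a x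
    have h2 : ∑ w ∈ G.neighborFinset a, x w < ∑ _w ∈ G.neighborFinset a, x u0 :=
      Finset.sum_lt_sum (fun i _ => hmax' i)
        ⟨b, (SimpleGraph.mem_neighborFinset G a b).mpr hab, hblt⟩
    have h3 : ∑ _w ∈ G.neighborFinset a, x u0 = (δ : ℝ) * x u0 := by
      rw [Finset.sum_const, SimpleGraph.card_neighborFinset_eq_degree, hreg a, nsmul_eq_mul]
    have h4 : (G.adjMatrix ℝ *ᵥ x) a = (δ : ℝ) * x a := by rw [hx]; simp
    rw [h1] at h4
    rw [h3, ← ha, ← h4] at h2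
    exact lt_irrefl _ h2
  have walk : ∀ (a b : V) (_ : G.Walk a b), x a = x u0 → x b = x u0 := by
    intro a b w
    induction w with
    | nil => exact id
    | cons hadj _ ih => intro ha; exact ih (step _ _ hadj ha)
  intro u v
  rw [walk u0 u (hconn u0 u).some rfl, walk u0 v (hconn u0 v).some rfl]

/-- The distance-`h` matrix of a graph: `(A_h)_{uv} = 1` if `dist(u,v) = h`, else `0`. -/
noncomputable def distMatrix {V : Type*} (G : SimpleGraph V) (h : ℕ) : Matrix V V ℝ :=
  Matrix.of fun u v => if G.dist u v = h then (1 : ℝ) else 0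

/-- Let `Γ` be a connected `δ`-regular graph with spectrally maximum
diameter `D = d`. If `Γ` is `(D-1)`-partially distance-regular (`A_h = p_h(A)` for all
`h ≤ D - 1`), then `Γ` is distance-regular (`A_h = p_h(A)` for all `h ≤ D`). -/
theorem stmt_15 {V : Type*} [Fintype V] [DecidableEq V]
    (G : SimpleGraph V) [DecidableRel G.Adj]
    (δ : ℕ) (hreg : G.IsRegularOfDegree δ) (hconn : G.Connected)
    (D : ℕ) (hD1 : ∀ u v : V, G.dist u v ≤ D) (hD2 : ∃ u v : V, G.dist u v = D)
    (d : ℕ) (hDd : D = d)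
    (lam : Fin (d + 1) → ℝ) (hlam : StrictAnti lam) (hlam0 : lam 0 = δ)
    (m : Fin (d + 1) → ℕ) (hmpos : ∀ i, 0 < m i)
    (hchar : Matrix.charpoly (G.adjMatrix ℝ) =
      ∏ i, (Polynomial.X - Polynomial.C (lam i)) ^ (m i))
    (n : ℕ) (hn : n = Fintype.card V)
    (p : ℕ → Polynomial ℝ)
    (hdeg : ∀ i ≤ d, (p i).natDegree = i)
    (horth : ∀ i ≤ d, ∀ j ≤ d,
      (1 / (n : ℝ)) * ∑ k, (m k : ℝ) * (p i).eval (lam k) * (p j).eval (lam k) =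
        if i = j then (p i).eval (lam 0) else 0)
    (hpart : ∀ h ≤ D - 1, distMatrix G h = Polynomial.aeval (G.adjMatrix ℝ) (p h)) :
    ∀ h ≤ D, distMatrix G h = Polynomial.aeval (G.adjMatrix ℝ) (p h) := by
  subst hDd
  rcases Nat.eq_zero_or_pos D with hD0 | hDpos
  · intro h hle; exact hpart h (by omega)
  suffices key : distMatrix G D = Polynomial.aeval (G.adjMatrix ℝ) (p D) by
    intro h hle
    rcases Nat.lt_or_ge h D with hlt | hge
    · exact hpart h (by omega)
    · have : h = D := le_antisymm hle hge
      rw [this]; exact key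
  -- basic facts
  obtain ⟨uD, vD, hDuv⟩ := hD2
  haveI hVne : Nonempty V := ⟨uD⟩
  have hn0 : (n : ℝ) ≠ 0 := by
    have : 0 < n := hn ▸ Fintype.card_pos
    exact_mod_cast this.ne'
  have hm0 : ∀ k : Fin (D + 1), (m k : ℝ) ≠ 0 := fun k => by
    exact_mod_cast (hmpos k).ne'
  -- p 0 = 1
  have hp0 : p 0 = 1 := by
    obtain ⟨c, hc⟩ := Polynomial.natDegree_eq_zero.mp (hdeg 0 (Nat.zero_le D))
    have h0 := hpart 0 (Nat.zero_le _)
    have he : distMatrix G 0 uD uD = (aeval (G.adjMatrix ℝ) (p 0)) uD uD := by rw [h0]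
    have hL : distMatrix G 0 uD uD = 1 := by simp [distMatrix]
    have hR : (aeval (G.adjMatrix ℝ) (p 0)) uD uD = c := by
      rw [← hc, aeval_C, Matrix.algebraMap_eq_diagonal]
      simp [Pi.algebraMap_apply]
    rw [hL, hR] at he
    rw [← hc, ← he]; exact Polynomial.C_1
  -- evaluations of p i at lam 0 are nonzero
  have horth' : ∀ i j : Fin (D + 1),
      ∑ k, (p (i : ℕ)).eval (lam k) * ((m k : ℝ) / n) * (p (j : ℕ)).eval (lam k) =
        if i = j then (p (i : ℕ)).eval (lam 0) else 0 := by
    intro i j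
    have := horth i (Nat.lt_succ_iff.mp i.isLt) j (Nat.lt_succ_iff.mp j.isLt)
    rw [Finset.mul_sum] at this
    have heq : ∀ k : Fin (D + 1),
        (1 / (n : ℝ)) * ((m k : ℝ) * (p (i : ℕ)).eval (lam k) * (p (j : ℕ)).eval (lam k)) =
        (p (i : ℕ)).eval (lam k) * ((m k : ℝ) / n) * (p (j : ℕ)).eval (lam k) := by
      intro k; ring
    rw [Finset.sum_congr rfl fun k _ => heq k] at this
    rw [this]
    simp [Fin.ext_iff]
  have hne : ∀ i : Fin (D + 1), ∃ k, (p (i : ℕ)).eval (lam k) ≠ 0 := by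
    intro i
    rcases Nat.eq_zero_or_pos (i : ℕ) with hi0 | hip
    · exact ⟨0, by rw [hi0, hp0]; simp⟩
    · by_contra hcon
      push_neg at hcon
      have hz : p (i : ℕ) = 0 :=
        Polynomial.eq_zero_of_natDegree_lt_card_of_eval_eq_zero _ hlam.injective hcon
          (by rw [hdeg i (Nat.lt_succ_iff.mp i.isLt), Fintype.card_fin]; omega)
      have hdeg' := hdeg i (Nat.lt_succ_iff.mp i.isLt)
      rw [hz, Polynomial.natDegree_zero] at hdeg'
      omega
  have hpos : ∀ i : Fin (D + 1), (p (i : ℕ)).eval (lam 0) ≠ 0 := by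
    intro i
    have h00 := horth' i i
    rw [if_pos rfl] at h00
    obtain ⟨k0, hk0⟩ := hne i
    have hlt : 0 < ∑ k, (p (i : ℕ)).eval (lam k) * ((m k : ℝ) / n) * (p (i : ℕ)).eval (lam k) := by
      apply Finset.sum_pos'
      · intro k _
        have : (p (i : ℕ)).eval (lam k) * ((m k : ℝ) / n) * (p (i : ℕ)).eval (lam k)
            = ((m k : ℝ) / n) * ((p (i : ℕ)).eval (lam k)) ^ 2 := by ring
        rw [this]
        have h1 : (0:ℝ) ≤ (m k : ℝ) / n := by
          apply div_nonneg (Nat.cast_nonneg _) (Nat.cast_nonneg _)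
        positivity
      · refine ⟨k0, Finset.mem_univ _, ?_⟩
        have : (p (i : ℕ)).eval (lam k0) * ((m k0 : ℝ) / n) * (p (i : ℕ)).eval (lam k0)
            = ((m k0 : ℝ) / n) * ((p (i : ℕ)).eval (lam k0)) ^ 2 := by ring
        rw [this]
        have h1 : (0:ℝ) < (m k0 : ℝ) / n := by
          apply div_pos
          · exact_mod_cast hmpos k0
          · have : 0 < n := hn ▸ Fintype.card_pos
            exact_mod_cast this
        have h2 : (0:ℝ) < ((p (i : ℕ)).eval (lam k0)) ^ 2 := by positivity
        positivity
    rw [h00] at hlt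
    exact hlt.ne'
  -- the matrix of evaluations
  set P : Matrix (Fin (D + 1)) (Fin (D + 1)) ℝ :=
    Matrix.of (fun i k => (p (i : ℕ)).eval (lam k)) with hP
  have hPdiag : P * diagonal (fun k => (m k : ℝ) / n) * Pᵀ =
      diagonal (fun i : Fin (D + 1) => (p (i : ℕ)).eval (lam 0)) := by
    ext i j
    have : (P * diagonal (fun k => (m k : ℝ) / n) * Pᵀ) i j
        = ∑ k, (p (i : ℕ)).eval (lam k) * ((m k : ℝ) / n) * (p (j : ℕ)).eval (lam k) := by
      rw [Matrix.mul_apply]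
      refine Finset.sum_congr rfl fun k _ => ?_
      rw [Matrix.mul_diagonal, Matrix.transpose_apply]
      rfl
    rw [this, horth' i j, Matrix.diagonal_apply]
  have hPdet : IsUnit P.det := by
    have hd := congrArg Matrix.det hPdiag
    rw [det_mul, det_mul, det_transpose, det_diagonal, det_diagonal] at hd
    have hprod : ∏ i : Fin (D + 1), (p (i : ℕ)).eval (lam 0) ≠ 0 :=
      Finset.prod_ne_zero_iff.mpr fun i _ => hpos i
    rw [← hd] at hprod
    rw [isUnit_iff_ne_zero]
    intro h0
    rw [h0] at hprod
    simp at hprod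
  -- the Hoffman-like polynomial q
  set q : Polynomial ℝ := ∑ j ∈ Finset.range (D + 1), p j with hq
  have hqeval : ∀ x : ℝ, q.eval x = ∑ j ∈ Finset.range (D + 1), (p j).eval x := by
    intro x; rw [hq, Polynomial.eval_finset_sum]
  have hqval : ∀ k : Fin (D + 1), q.eval (lam k) = if k = 0 then (n : ℝ) / (m 0) else 0 := by
    set y : Fin (D + 1) → ℝ := fun k =>
      ((m k : ℝ) / n) * (q.eval (lam k) - if k = 0 then (n : ℝ) / (m 0) else 0) with hy
    have hPy : P *ᵥ y = 0 := by
      funext i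
      show ∑ k, P i k * y k = 0
      have hsplit : ∀ k : Fin (D + 1), P i k * y k =
          (p (i : ℕ)).eval (lam k) * ((m k : ℝ) / n) * q.eval (lam k)
          - P i k * (((m k : ℝ) / n) * (if k = 0 then (n : ℝ) / (m 0) else 0)) := by
        intro k
        simp only [hP, Matrix.of_apply, hy]
        ring
      rw [Finset.sum_congr rfl fun k _ => hsplit k, Finset.sum_sub_distrib]
      have hfst : ∑ k, (p (i : ℕ)).eval (lam k) * ((m k : ℝ) / n) * q.eval (lam k)
          = (p (i : ℕ)).eval (lam 0) := by
        have hswap : ∑ k, (p (i : ℕ)).eval (lam k) * ((m k : ℝ) / n) * q.eval (lam k)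
            = ∑ j : Fin (D + 1), ∑ k,
              (p (i : ℕ)).eval (lam k) * ((m k : ℝ) / n) * (p (j : ℕ)).eval (lam k) := by
          rw [Finset.sum_comm]
          refine Finset.sum_congr rfl fun k _ => ?_
          rw [hqeval, ← Fin.sum_univ_eq_sum_range, Finset.mul_sum]
        rw [hswap]
        rw [Finset.sum_congr rfl fun j _ => horth' i j]
        simp
      have hsnd : ∑ k, P i k * (((m k : ℝ) / n) * (if k = 0 then (n : ℝ) / (m 0) else 0))
          = (p (i : ℕ)).eval (lam 0) := by
        rw [Finset.sum_eq_single 0]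
        · have hone : ((m 0 : ℝ) / n) * ((n : ℝ) / (m 0)) = 1 := by
            rw [div_mul_div_comm, mul_comm ((n : ℝ)) ((m 0 : ℝ))]
            exact div_self (mul_ne_zero (hm0 0) hn0)
          rw [if_pos rfl, hone, mul_one]
          simp [hP]
        · intro b _ hb
          rw [if_neg hb, mul_zero, mul_zero]
        · intro hmem; exact absurd (Finset.mem_univ _) hmem
      rw [hfst, hsnd, sub_self]
    have hy0 : y = 0 := by
      have h1 : P⁻¹ *ᵥ (P *ᵥ y) = y := by
        rw [mulVec_mulVec, Matrix.nonsing_inv_mul _ hPdet, one_mulVec]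
      rw [hPy, mulVec_zero] at h1
      exact h1.symm
    intro k
    have hk := congrFun hy0 k
    simp only [hy, Pi.zero_apply] at hk
    have hmn : ((m k : ℝ) / n) ≠ 0 := div_ne_zero (hm0 k) hn0
    have := (mul_eq_zero.mp hk).resolve_left hmn
    linarith [this]
  -- spectral decomposition
  have hA : (G.adjMatrix ℝ).IsHermitian := by
    ext i j
    rw [Matrix.conjTranspose_apply]
    simp [SimpleGraph.adjMatrix_apply, SimpleGraph.adj_comm]
  set U : Matrix V V ℝ := (hA.eigenvectorUnitary : Matrix V V ℝ) with hU
  set mu : V → ℝ := hA.eigenvalues with hmu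
  have hU2 : U * star U = 1 := Matrix.mem_unitaryGroup_iff.mp hA.eigenvectorUnitary.2
  have hU1 : star U * U = 1 := Matrix.mem_unitaryGroup_iff'.mp hA.eigenvectorUnitary.2
  have hspec : G.adjMatrix ℝ = U * diagonal mu * star U := by
    have hsp := hA.spectral_theorem
    rwa [RCLike.ofReal_real_eq_id, Function.id_comp] at hsp
  have hcp : (G.adjMatrix ℝ).charpoly = ∏ i, (X - C (mu i)) := by
    conv_lhs => rw [hspec]
    rw [my_charpoly_conj _ _ hU2, my_charpoly_diagonal]
  have hcpEq : ∏ i : V, (X - C (mu i)) = ∏ k, (X - C (lam k)) ^ m k := by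
    rw [← hcp, hchar]
  have hmem : ∀ i : V, ∃ k, mu i = lam k := by
    intro i
    have h0 : eval (mu i) (∏ j : V, (X - C (mu j))) = 0 := by
      rw [eval_prod]
      exact Finset.prod_eq_zero (Finset.mem_univ i) (by simp)
    rw [hcpEq, eval_prod] at h0
    obtain ⟨k, -, hk⟩ := Finset.prod_eq_zero_iff.mp h0
    refine ⟨k, ?_⟩
    rw [eval_pow, eval_sub, eval_X, eval_C] at hk
    exact sub_eq_zero.mp (pow_eq_zero_iff (hmpos k).ne' |>.mp hk)
  -- multiplicity count
  have hmonic : (∏ k, (X - C (lam k)) ^ m k) ≠ 0 :=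
    (monic_prod_of_monic _ _ fun k _ => (monic_X_sub_C (lam k)).pow _).ne_zero
  have hrootsL : (∏ i : V, (X - C (mu i))).roots = Finset.univ.val.map mu := by
    have hrw : ∏ i : V, (X - C (mu i)) =
        (Multiset.map (fun a => X - C a) (Finset.univ.val.map mu)).prod := by
      rw [Multiset.map_map]
      rfl
    rw [hrw, Polynomial.roots_multiset_prod_X_sub_C]
  have hcount : (Finset.univ.filter fun i : V => mu i = lam 0).card = m 0 := by
    have hrootsR : (∏ k, (X - C (lam k)) ^ m k).roots
        = Finset.univ.val.bind fun k => (m k) • ({lam k} : Multiset ℝ) := by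
      rw [Polynomial.roots_prod _ _ hmonic]
      congr 1
      funext k
      rw [Polynomial.roots_pow, Polynomial.roots_X_sub_C]
    have hcnt := congrArg (Multiset.count (lam 0)) (hrootsL.symm.trans (by rw [hcpEq, hrootsR]))
    rw [Multiset.count_map, Multiset.count_bind] at hcnt
    have hR : (Multiset.map (fun k => Multiset.count (lam 0) ((m k) • ({lam k} : Multiset ℝ)))
        Finset.univ.val).sum = m 0 := by
      have : ∀ k : Fin (D + 1),
          Multiset.count (lam 0) ((m k) • ({lam k} : Multiset ℝ))
          = if k = 0 then m k else 0 := by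
        intro k
        rw [Multiset.count_nsmul, Multiset.count_singleton]
        by_cases hk : k = 0
        · subst hk; simp
        · rw [if_neg fun hlk => hk (hlam.injective hlk.symm), if_neg hk, mul_zero]
      calc (Multiset.map (fun k => Multiset.count (lam 0) ((m k) • ({lam k} : Multiset ℝ)))
          Finset.univ.val).sum
          = ∑ k : Fin (D + 1), Multiset.count (lam 0) ((m k) • ({lam k} : Multiset ℝ)) := rfl
        _ = ∑ k : Fin (D + 1), (if k = 0 then m k else 0) := by
            exact Finset.sum_congr rfl fun k _ => this k
        _ = m 0 := by rw [Finset.sum_ite_eq' Finset.univ 0 m]; simp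
    rw [hR] at hcnt
    calc (Finset.univ.filter fun i : V => mu i = lam 0).card
        = Multiset.card (Multiset.filter (fun a => mu a = lam 0) Finset.univ.val) := by
          rw [Finset.card, Finset.filter_val]
      _ = Multiset.card (Multiset.filter (fun a => lam 0 = mu a) Finset.univ.val) := by
          rw [Multiset.filter_congr (fun x _ => eq_comm)]
      _ = m 0 := hcnt
  -- eigencolumns for lam 0 are constant
  have hAU : G.adjMatrix ℝ * U = U * diagonal mu := by
    conv_lhs => rw [hspec]
    rw [mul_assoc, mul_assoc, hU1, mul_one]
  have hcol : ∀ i : V, mu i = lam 0 → ∀ u v : V, U u i * U v i = 1 / n := by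
    intro i hi u v
    set x : V → ℝ := fun w => U w i with hx
    have hxe : G.adjMatrix ℝ *ᵥ x = (δ : ℝ) • x := by
      funext w
      have h1 : (G.adjMatrix ℝ *ᵥ x) w = (G.adjMatrix ℝ * U) w i := by
        simp [Matrix.mulVec, Matrix.mul_apply, dotProduct, hx]
      rw [h1, hAU, Matrix.mul_diagonal, Pi.smul_apply, smul_eq_mul]
      rw [hi, hlam0]
      show U w i * (δ : ℝ) = (δ : ℝ) * x w
      rw [hx, mul_comm]
    have hconst := my_eigen_const G δ hreg hconn x hxe
    have hnorm : ∑ w, x w * x w = 1 := by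
      have h2 := congrFun (congrFun hU1 i) i
      rw [Matrix.mul_apply, Matrix.one_apply_eq] at h2
      rw [← h2]
      refine Finset.sum_congr rfl fun w _ => ?_
      rw [Matrix.star_apply, star_trivial]
    have hsum : ∑ w, x w * x w = (Fintype.card V : ℝ) * (x u * x u) := by
      rw [Finset.sum_congr rfl fun w _ => by rw [hconst w u]]
      rw [Finset.sum_const, Finset.card_univ, nsmul_eq_mul]
    have hxx : x u * x u = 1 / n := by
      rw [hsum] at hnorm
      rw [hn]
      field_simp at hnorm ⊢
      linarith [hnorm]
    show x u * x v = 1 / n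
    rw [hconst v u, hxx]
  -- entries of q(A) are all 1
  have hqA : ∀ u v : V, (aeval (G.adjMatrix ℝ) q) u v = 1 := by
    intro u v
    let φ : Matrix V V ℝ →ₐ[ℝ] Matrix V V ℝ :=
      { toFun := fun M => U * M * star U
        map_one' := by show U * 1 * star U = 1; rw [mul_one, hU2]
        map_mul' := fun M N => by
          show U * (M * N) * star U = (U * M * star U) * (U * N * star U)
          simp only [mul_assoc]
          rw [← mul_assoc (star U) U (N * star U), hU1, one_mul]
        map_zero' := by show U * 0 * star U = 0; rw [mul_zero, zero_mul]
        map_add' := fun M N => by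
          show U * (M + N) * star U = U * M * star U + U * N * star U
          rw [mul_add, add_mul]
        commutes' := fun r => by
          show U * algebraMap ℝ (Matrix V V ℝ) r * star U = algebraMap ℝ (Matrix V V ℝ) r
          simp only [Algebra.algebraMap_eq_smul_one]
          rw [mul_smul_comm, mul_one, smul_mul_assoc, hU2] }
    have h1 : aeval (G.adjMatrix ℝ) q = U * diagonal (fun i => q.eval (mu i)) * star U := by
      have h3 : φ (diagonal mu) = G.adjMatrix ℝ := by
        show U * diagonal mu * star U = _
        rw [← hspec]
      have h2 := aeval_algHom_apply φ (diagonal mu) q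
      rw [h3] at h2
      rw [h2, my_aeval_diagonal]
      rfl
    have h4 : (U * diagonal (fun i => q.eval (mu i)) * star U) u v
        = ∑ i, q.eval (mu i) * (U u i * U v i) := by
      rw [Matrix.mul_apply]
      refine Finset.sum_congr rfl fun i _ => ?_
      rw [Matrix.mul_diagonal, Matrix.star_apply, star_trivial]
      ring
    have h5 : ∀ i : V, q.eval (mu i) * (U u i * U v i)
        = if mu i = lam 0 then ((n : ℝ) / (m 0)) * (1 / n) else 0 := by
      intro i
      by_cases hi : mu i = lam 0
      · rw [if_pos hi, hi, hqval 0, if_pos rfl, hcol i hi u v]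
      · rw [if_neg hi]
        obtain ⟨k, hk⟩ := hmem i
        have hk0 : k ≠ 0 := fun hzz => hi (by rw [hk, hzz])
        rw [hk, hqval k, if_neg hk0, zero_mul]
    rw [h1, h4, Finset.sum_congr rfl fun i _ => h5 i, ← Finset.sum_filter,
      Finset.sum_const, hcount, nsmul_eq_mul]
    field_simp
    exact div_self (hm0 0)
  -- sum of distance matrices is all-ones
  have hsumD : ∀ u v : V, ∑ h ∈ Finset.range (D + 1), distMatrix G h u v = 1 := by
    intro u v
    have h6 : ∑ h ∈ Finset.range (D + 1), distMatrix G h u v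
        = ∑ h ∈ Finset.range (D + 1), (if G.dist u v = h then (1 : ℝ) else 0) := rfl
    rw [h6, Finset.sum_ite_eq (Finset.range (D + 1)) (G.dist u v) (fun _ => (1 : ℝ))]
    rw [if_pos (Finset.mem_range.mpr (Nat.lt_succ_of_le (hD1 u v)))]
  -- conclusion
  ext u v
  have e1 : ∑ j ∈ Finset.range (D + 1), (aeval (G.adjMatrix ℝ) (p j)) u v = 1 := by
    have h7 : aeval (G.adjMatrix ℝ) q
        = ∑ j ∈ Finset.range (D + 1), aeval (G.adjMatrix ℝ) (p j) := by
      rw [hq, map_sum]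
    rw [← Matrix.sum_apply u v (Finset.range (D + 1))
      (fun j => aeval (G.adjMatrix ℝ) (p j)), ← h7]
    exact hqA u v
  have e2 := hsumD u v
  rw [Finset.sum_range_succ] at e1 e2
  have e3 : ∀ j ∈ Finset.range D, (aeval (G.adjMatrix ℝ) (p j)) u v = distMatrix G j u v := by
    intro j hj
    rw [hpart j (by have := Finset.mem_range.mp hj; omega)]
  rw [Finset.sum_congr rfl e3] at e1
  linarith [e1, e2]
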